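/- Every word in K_{m,n} lies in K₁: if u = e₁x₁⋯e_mx_m p₀ x p₁ x̄ p₂ y₁f₁⋯y_nf_n and v = e₁'x₁⋯e_m'x_m q_x y₁f₁'⋯y_nf_n' with x₁⋯x_m and y₁⋯y_n reduced, x_m ≠ x̄, y₁ ≠ x, all the e, e', p, q, f, f' words idempotent, e_i' avoiding x_i, f_i' avoiding ȳ_i, and q_x avoiding x, then u and v reduce to the same element of FG(X), the Munn tree T_u contains the edge (w, wx) for w = x₁⋯x_m, and T_v does not contain this edge. -/

import Mathlib

/-- The symmetric alphabet `X^± = X ∪ X̄`, encoded as pairs (letter, sign). -/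
abbrev Letter (X : Type) : Type := X × Bool

/-- Formal inverse of a letter. -/
def linv {X : Type} (a : Letter X) : Letter X := (a.1, !a.2)

/-- `wordInv v` is `v̄`: the reverse of `v` with every letter replaced by its inverse. -/
def wordInv {X : Type} (v : List (Letter X)) : List (Letter X) := v.reverse.map linv

/-- The vertex set of the Munn tree of `w`: reductions of all prefixes of `w` in FG(X). -/
def munn {X : Type} (w : List (Letter X)) : Set (FreeGroup X) :=
  {g | ∃ p : List (Letter X), p <+: w ∧ FreeGroup.mk p = g}

/-- A word represents an idempotent of FIM(X) iff it reduces to 1 in FG(X). -/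
def IsIdemWord {X : Type} (w : List (Letter X)) : Prop := FreeGroup.mk w = 1

/-- A word is reduced iff it has no adjacent mutually inverse letters. -/
def Reduced {X : Type} (w : List (Letter X)) : Prop :=
  List.Chain' (fun a b => b ≠ linv a) w

/-- The Munn tree of `w` contains the edge from (the reduced word) `p` to `p · a`. -/
def EdgeIn {X : Type} (w : List (Letter X)) (p : List (Letter X)) (a : Letter X) : Prop :=
  Reduced (p ++ [a]) ∧ FreeGroup.mk p ∈ munn w ∧ FreeGroup.mk (p ++ [a]) ∈ munn w

/-- An idempotent word avoids `x` iff its Munn tree omits the edge `(ε, x)`. -/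
def Avoids {X : Type} (w : List (Letter X)) (x : Letter X) : Prop := ¬ EdgeIn w [] x

/-- Equality in the free inverse monoid FIM(X): equality of Munn trees. -/
def EqFIM {X : Type} (u v : List (Letter X)) : Prop :=
  FreeGroup.mk u = FreeGroup.mk v ∧ munn u = munn v

/-- The alphabet `X^± ∪ {#}`. -/
abbrev HSym (X : Type) : Type := Letter X ⊕ Unit

/-- The hashSym symbol. -/
def hashSym {X : Type} : HSym X := Sum.inr ()

/-- `encode u v = u # v̄`. -/
def encode {X : Type} (u v : List (Letter X)) : List (HSym X) :=
  u.map Sum.inl ++ hashSym :: (wordInv v).map Sum.inl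


instance {T N : Type} [DecidableEq T] [DecidableEq N] : DecidableEq (ContextFreeRule T N) :=
  fun a b => decidable_of_iff (a.input = b.input ∧ a.output = b.output)
    (by cases a; cases b; simp)

/-- Interleaving `e₁x₁e₂x₂⋯e_mx_m`. -/
def interE {X : Type} (es : List (List (Letter X))) (xs : List (Letter X)) : List (Letter X) :=
  (List.zipWith (fun e x => e ++ [x]) es xs).flatten

/-- Interleaving `y₁f₁y₂f₂⋯y_nf_n`. -/
def interF {X : Type} (ys : List (Letter X)) (fs : List (List (Letter X))) : List (Letter X) :=
  (List.zipWith (fun y f => y :: f) ys fs).flatten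

/-- Derivability of a terminal word from a given nonterminal of a grammar. -/
def DerivesFrom {T : Type} (g : ContextFreeGrammar T) (n : g.NT) (w : List T) : Prop :=
  g.Derives [Symbol.nonterminal n] (w.map Symbol.terminal)

namespace KmnAux
variable {X : Type}

lemma linv_linv (a : Letter X) : linv (linv a) = a := by simp [linv]

lemma mk_append (l₁ l₂ : List (Letter X)) :
    FreeGroup.mk (l₁ ++ l₂) = FreeGroup.mk l₁ * FreeGroup.mk l₂ :=
  (FreeGroup.mul_mk).symm

lemma mk_cons (a : Letter X) (l : List (Letter X)) :
    FreeGroup.mk (a :: l) = FreeGroup.mk [a] * FreeGroup.mk l := by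
  rw [← mk_append]; rfl

lemma mk_linv (a : Letter X) : FreeGroup.mk [linv a] = (FreeGroup.mk [a])⁻¹ := by
  rw [FreeGroup.inv_mk]; simp [FreeGroup.invRev, linv]

lemma eq_linv_iff (a b : Letter X) : b = linv a ↔ a.1 = b.1 ∧ a.2 = !b.2 := by
  cases a with | mk a1 a2 => cases b with | mk b1 b2 =>
  cases a2 <;> cases b2 <;> simp [linv] <;> tauto

lemma reduce_eq_self [DecidableEq X] {l : List (Letter X)} (h : Reduced l) :
    FreeGroup.reduce l = l := by
  induction l with
  | nil => rfl
  | cons a t ih =>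
    have ht : Reduced t := h.tail
    rw [FreeGroup.reduce.cons, ih ht]
    cases t with
    | nil => rfl
    | cons b s =>
      show (if a.1 = b.1 ∧ a.2 = !b.2 then s else a :: b :: s) = a :: b :: s
      rw [if_neg]
      intro hc
      exact (List.isChain_cons_cons.mp h).1 ((eq_linv_iff a b).mpr hc)

lemma reduced_reduce [DecidableEq X] (L : List (Letter X)) : Reduced (FreeGroup.reduce L) := by
  induction L with
  | nil => simp [Reduced, List.Chain']
  | cons a t ih =>
    rw [FreeGroup.reduce.cons]
    cases h : FreeGroup.reduce t with
    | nil => simp [Reduced, List.Chain']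
    | cons hd tl =>
      rw [h] at ih
      show Reduced (if a.1 = hd.1 ∧ a.2 = !hd.2 then tl else a :: hd :: tl)
      by_cases hc : a.1 = hd.1 ∧ a.2 = !hd.2
      · rw [if_pos hc]; exact ih.tail
      · rw [if_neg hc]
        exact List.isChain_cons_cons.mpr ⟨fun he => hc ((eq_linv_iff a hd).mp he), ih⟩

lemma mk_inj {s t : List (Letter X)} (hs : Reduced s) (ht : Reduced t)
    (h : FreeGroup.mk s = FreeGroup.mk t) : s = t := by
  classical
  have := FreeGroup.reduce.sound h
  rwa [reduce_eq_self hs, reduce_eq_self ht] at this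

lemma mk_ne_one {s : List (Letter X)} (hs : Reduced s) (hne : s ≠ []) :
    FreeGroup.mk s ≠ 1 := by
  intro h
  rw [FreeGroup.one_eq_mk] at h
  exact hne (mk_inj hs (by simp [Reduced, List.Chain']) h)

lemma munn_mono {u w : List (Letter X)} (h : u <+: w) : munn u ⊆ munn w := by
  rintro g ⟨p, hp, rfl⟩
  exact ⟨p, hp.trans h, rfl⟩

lemma prefix_append_cases {p l₁ l₂ : List (Letter X)} (h : p <+: l₁ ++ l₂) :
    p <+: l₁ ∨ ∃ r, r <+: l₂ ∧ p = l₁ ++ r := by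
  rcases le_or_gt p.length l₁.length with hl | hl
  · exact Or.inl (List.prefix_of_prefix_length_le h (l₁.prefix_append l₂) hl)
  · obtain ⟨r, rfl⟩ := List.prefix_of_prefix_length_le (l₁.prefix_append l₂) h hl.le
    obtain ⟨t, ht⟩ := h
    rw [List.append_assoc] at ht
    exact Or.inr ⟨r, ⟨t, List.append_cancel_left ht⟩, rfl⟩

lemma prefix_singleton {p : List (Letter X)} {a : Letter X} (h : p <+: [a]) :
    p = [] ∨ p = [a] := by
  cases p with
  | nil => exact Or.inl rfl
  | cons b t =>
    obtain ⟨hb, ht⟩ := List.cons_prefix_cons.mp h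
    rw [List.prefix_nil] at ht
    exact Or.inr (by rw [hb, ht])

lemma avoids_notMem {w : List (Letter X)} {a : Letter X} (h : Avoids w a) :
    FreeGroup.mk [a] ∉ munn w := fun hm =>
  h ⟨by simp [Reduced, List.Chain'], ⟨[], ⟨List.nil_prefix, rfl⟩⟩, hm⟩

lemma wordInv_cons (a : Letter X) (l : List (Letter X)) :
    wordInv (a :: l) = wordInv l ++ [linv a] := by simp [wordInv]

lemma reduced_wordInv {l : List (Letter X)} (h : Reduced l) : Reduced (wordInv l) := by
  unfold Reduced List.Chain' wordInv at *
  rw [List.isChain_map, List.isChain_reverse]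
  exact h.imp fun {a b} hab => by
    show linv a ≠ linv (linv b)
    rw [linv_linv]
    exact hab.symm


lemma head_cases {r : List (Letter X)} (hr : Reduced r) {a b : Letter X} {t : List (Letter X)}
    (hred : Reduced (a :: t)) (h : FreeGroup.mk (a :: t) = FreeGroup.mk (r ++ [b])) :
    (r = [] ∧ a = b ∧ t = []) ∨ ∃ r₀, r = a :: r₀ := by
  induction r using List.reverseRecOn with
  | nil =>
    have h' : FreeGroup.mk (a :: t) = FreeGroup.mk [b] := by simpa using h
    have := mk_inj hred (show Reduced [b] by simp [Reduced, List.Chain']) h'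
    injection this with h1 h2
    exact Or.inl ⟨rfl, h1, h2⟩
  | append_singleton r' c _ =>
    by_cases hc : c = linv b
    · subst hc
      have hmkr : FreeGroup.mk ((r' ++ [linv b]) ++ [b]) = FreeGroup.mk r' := by
        rw [mk_append, mk_append, mk_linv, mul_assoc, inv_mul_cancel, mul_one]
      have hr' : Reduced r' := hr.left_of_append
      have := mk_inj hred hr' (h.trans hmkr)
      refine Or.inr ⟨t ++ [linv b], ?_⟩
      rw [← this]
      rfl
    · have hjunc : b ≠ linv c := fun he => hc (by rw [he, linv_linv])
      have hred2 : Reduced ((r' ++ [c]) ++ [b]) := by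
        refine List.isChain_append.mpr ⟨hr, by simp [Reduced, List.Chain'], ?_⟩
        intro p hp y hy
        simp at hy
        rw [List.getLast?_concat] at hp
        simp at hp
        subst hy; subst hp
        exact hjunc
      have heq := mk_inj hred hred2 h
      cases r' with
      | nil =>
        simp at heq
        obtain ⟨h1, -⟩ := heq
        exact Or.inr ⟨[], by simp [h1]⟩
      | cons d r'' =>
        rw [show ((d :: r'') ++ [c]) ++ [b] = d :: ((r'' ++ [c]) ++ [b]) by simp] at heq
        injection heq with h1 _
        exact Or.inr ⟨r'' ++ [c], by rw [h1]; rfl⟩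

/-- Key lemma: if a reduced word `a :: t` is a vertex of the Munn tree of `w`,
then so is `[a]`. -/
lemma mem_munn_head :
    ∀ (w : List (Letter X)) {a : Letter X} {t : List (Letter X)},
      Reduced (a :: t) → FreeGroup.mk (a :: t) ∈ munn w → FreeGroup.mk [a] ∈ munn w := by
  classical
  intro w
  induction w using List.reverseRecOn with
  | nil =>
    rintro a t hred ⟨p, hp, hmk⟩
    rw [List.prefix_nil] at hp
    subst hp
    exact absurd (mk_inj (by simp [Reduced, List.Chain']) hred hmk) (by simp)
  | append_singleton w' b IH =>
    rintro a t hred ⟨p, hp, hmk⟩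
    rcases prefix_append_cases hp with hp' | ⟨r, hr, rfl⟩
    · exact munn_mono ⟨[b], rfl⟩ (IH hred ⟨p, hp', hmk⟩)
    · rcases prefix_singleton hr with rfl | rfl
      · rw [List.append_nil] at hmk
        exact munn_mono ⟨[b], rfl⟩ (IH hred ⟨w', List.prefix_refl _, hmk⟩)
      · -- p = w' ++ [b]
        set R : List (Letter X) := FreeGroup.reduce w' with hR
        have hRred : Reduced R := reduced_reduce w'
        have hRmk : FreeGroup.mk R = FreeGroup.mk w' := FreeGroup.reduce.self
        have hrw : FreeGroup.mk (a :: t) = FreeGroup.mk (R ++ [b]) := by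
          rw [← hmk, mk_append, mk_append, hRmk]
        -- analyze R from the right
        rcases head_cases hRred hred hrw with ⟨hRnil, hab, htnil⟩ | ⟨r₀, hr₀⟩
        · exact ⟨w' ++ [b], List.prefix_refl _, by rw [hmk, htnil]⟩
        · have hmem : FreeGroup.mk (a :: r₀) ∈ munn w' :=
            ⟨w', List.prefix_refl _, by rw [← hRmk, hr₀]⟩
          have : Reduced (a :: r₀) := by rw [← hr₀]; exact hRred
          exact munn_mono ⟨[b], rfl⟩ (IH this hmem)

lemma interE_nil (xs : List (Letter X)) : interE [] xs = [] := by simp [interE]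

lemma interE_cons (e : List (Letter X)) (es : List (List (Letter X)))
    (x : Letter X) (xs : List (Letter X)) :
    interE (e :: es) (x :: xs) = (e ++ [x]) ++ interE es xs := by
  simp [interE]

lemma interF_nil (fs : List (List (Letter X))) : interF [] fs = [] := by simp [interF]

lemma interF_cons (y : Letter X) (ys : List (Letter X))
    (f : List (Letter X)) (fs : List (List (Letter X))) :
    interF (y :: ys) (f :: fs) = (y :: f) ++ interF ys fs := by
  simp [interF]

lemma mk_interE : ∀ (es : List (List (Letter X))) (xs : List (Letter X)),
    es.length = xs.length → (∀ p ∈ es.zip xs, IsIdemWord p.1) →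
    FreeGroup.mk (interE es xs) = FreeGroup.mk xs := by
  intro es
  induction es with
  | nil =>
    intro xs hlen _
    have : xs = [] := by simpa using hlen.symm
    subst this; rw [interE_nil]
  | cons e es ih =>
    intro xs hlen hid
    cases xs with
    | nil => simp at hlen
    | cons x xs' =>
      rw [interE_cons, mk_append, mk_append, mk_cons x xs']
      rw [hid (e, x) (by simp), ih xs' (by simpa using hlen)
        (fun p hp => hid p (List.mem_cons_of_mem _ hp))]
      rw [one_mul]

lemma mk_interF : ∀ (ys : List (Letter X)) (fs : List (List (Letter X))),
    fs.length = ys.length → (∀ p ∈ fs.zip ys, IsIdemWord p.1) →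
    FreeGroup.mk (interF ys fs) = FreeGroup.mk ys := by
  intro ys
  induction ys with
  | nil => intro fs _ _; rw [interF_nil]
  | cons y ys' ih =>
    intro fs hlen hid
    cases fs with
    | nil => simp at hlen
    | cons f fs' =>
      rw [interF_cons, mk_append, mk_cons, mk_cons y ys']
      rw [hid (f, y) (by simp), ih fs' (by simpa using hlen)
        (fun p hp => hid p (List.mem_cons_of_mem _ hp))]
      rw [mul_one]

lemma no_edge_interE : ∀ (es : List (List (Letter X))) (xs : List (Letter X))
    (x : Letter X) (p : List (Letter X)),
    es.length = xs.length → Reduced (xs ++ [x]) →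
    (∀ pr ∈ es.zip xs, IsIdemWord pr.1 ∧ Avoids pr.1 pr.2) →
    p <+: interE es xs → FreeGroup.mk p = FreeGroup.mk (xs ++ [x]) → False := by
  intro es
  induction es with
  | nil =>
    intro xs x p hlen hred _ hp hmk
    have hxs : xs = [] := by simpa using hlen.symm
    subst hxs
    rw [interE_nil, List.prefix_nil] at hp
    subst hp
    exact mk_ne_one hred (by simp) hmk.symm
  | cons e es ih =>
    intro xs x p hlen hred hz hp hmk
    cases xs with
    | nil => simp at hlen
    | cons x₁ xs' =>
      have hze : IsIdemWord e ∧ Avoids e x₁ := hz (e, x₁) (by simp)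
      have hredt : Reduced (xs' ++ [x]) := hred.tail
      have hcons : (x₁ :: xs') ++ [x] = x₁ :: (xs' ++ [x]) := rfl
      rw [interE_cons] at hp
      rcases prefix_append_cases hp with hp1 | ⟨r, hr, rfl⟩
      · rcases prefix_append_cases hp1 with hp2 | ⟨r, hr, rfl⟩
        · -- p <+: e : head lemma
          have hm : FreeGroup.mk (x₁ :: (xs' ++ [x])) ∈ munn e :=
            ⟨p, hp2, by rw [hmk, hcons]⟩
          exact avoids_notMem hze.2 (mem_munn_head e (by rwa [← hcons]) hm)
        · rcases prefix_singleton hr with rfl | rfl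
          · rw [List.append_nil] at hmk
            rw [hze.1] at hmk
            exact mk_ne_one hred (by simp) hmk.symm
          · rw [mk_append, hze.1, one_mul, hcons] at hmk
            have := mk_inj (by simp [Reduced, List.Chain']) hred hmk
            simp at this
      · rw [mk_append, mk_append, hze.1, one_mul, hcons, mk_cons x₁ (xs' ++ [x])] at hmk
        have hmk' : FreeGroup.mk r = FreeGroup.mk (xs' ++ [x]) := mul_left_cancel hmk
        exact ih xs' x r (by simpa using hlen) hredt
          (fun pr hpr => hz pr (List.mem_cons_of_mem _ hpr)) hr hmk'

lemma no_edge_interF : ∀ (ys : List (Letter X)) (fs : List (List (Letter X)))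
    (s p : List (Letter X)),
    fs.length = ys.length → Reduced (wordInv ys ++ s) → s ≠ [] →
    (∀ pr ∈ fs.zip ys, IsIdemWord pr.1 ∧ Avoids pr.1 (linv pr.2)) →
    p <+: interF ys fs → FreeGroup.mk p = FreeGroup.mk s → False := by
  intro ys
  induction ys with
  | nil =>
    intro fs s p _ hinv hs _ hp hmk
    rw [interF_nil, List.prefix_nil] at hp
    subst hp
    have hsred : Reduced s := by simpa [wordInv] using hinv
    exact mk_ne_one hsred hs hmk.symm
  | cons y ys' ih =>
    intro fs s p hlen hinv hs hz hp hmk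
    cases fs with
    | nil => simp at hlen
    | cons f fs' =>
      have hzf : IsIdemWord f ∧ Avoids f (linv y) := hz (f, y) (by simp)
      have hinv' : Reduced (wordInv ys' ++ (linv y :: s)) := by
        rw [wordInv_cons, List.append_assoc] at hinv
        exact hinv
      have hls : Reduced (linv y :: s) := hinv'.right_of_append
      rw [interF_cons] at hp
      rcases prefix_append_cases hp with hp1 | ⟨r, hr, rfl⟩
      · cases p with
        | nil =>
          exact mk_ne_one (s := s) hls.tail hs (hmk.symm.trans FreeGroup.one_eq_mk.symm)
        | cons c p' =>
          obtain ⟨hcy, hp2⟩ := List.cons_prefix_cons.mp hp1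
          rw [mk_cons, hcy] at hmk
          have hmk' : FreeGroup.mk p' = FreeGroup.mk (linv y :: s) := by
            rw [mk_cons, mk_linv, ← hmk, ← mul_assoc, inv_mul_cancel, one_mul]
          have hm : FreeGroup.mk (linv y :: s) ∈ munn f := ⟨p', hp2, hmk'⟩
          exact avoids_notMem hzf.2 (mem_munn_head f hls hm)
      · rw [show (y :: f) ++ r = y :: (f ++ r) from rfl, mk_cons, mk_append, hzf.1,
          one_mul] at hmk
        have hmk' : FreeGroup.mk r = FreeGroup.mk (linv y :: s) := by
          rw [mk_cons, mk_linv, ← hmk, ← mul_assoc, inv_mul_cancel, one_mul]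
        exact ih fs' (linv y :: s) r (by simpa using hlen) hinv' (by simp)
          (fun pr hpr => hz pr (List.mem_cons_of_mem _ hpr)) hr hmk'

end KmnAux

open KmnAux

/-- Every word of `K_{m,n}` lies in `K₁`: with `u` and `v` factored as prescribed,
`u =_{FG(X)} v`, the Munn tree `T_u` contains the edge `(w, wx)` where `w = x₁⋯x_m`,
and `T_v` does not contain this edge. -/
theorem Kmn_subset_K1 {X : Type} [Fintype X]
    (u v : List (Letter X))
    (xs : List (Letter X)) (x : Letter X) (ys : List (Letter X))
    (es fs es' fs' : List (List (Letter X))) (p0 p1 p2 q : List (Letter X))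
    (hes_len : es.length = xs.length) (hfs_len : fs.length = ys.length)
    (hes'_len : es'.length = xs.length) (hfs'_len : fs'.length = ys.length)
    (hredx : Reduced (xs ++ [x])) (hredy : Reduced ys) (hy1 : ys.head? ≠ some x)
    (hes : ∀ e ∈ es, IsIdemWord e)
    (hp0 : IsIdemWord p0) (hp1 : IsIdemWord p1) (hp2 : IsIdemWord p2)
    (hfs : ∀ f ∈ fs, IsIdemWord f)
    (hes' : ∀ p ∈ es'.zip xs, IsIdemWord p.1 ∧ Avoids p.1 p.2)
    (hq : IsIdemWord q) (hqx : Avoids q x)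
    (hfs' : ∀ p ∈ fs'.zip ys, IsIdemWord p.1 ∧ Avoids p.1 (linv p.2))
    (hu : u = interE es xs ++ p0 ++ x :: (p1 ++ linv x :: (p2 ++ interF ys fs)))
    (hv : v = interE es' xs ++ q ++ interF ys fs') :
    FreeGroup.mk u = FreeGroup.mk v ∧ EdgeIn u xs x ∧ ¬ EdgeIn v xs x := by
  have hE : FreeGroup.mk (interE es xs) = FreeGroup.mk xs :=
    mk_interE es xs hes_len (fun p hp => hes p.1 (List.of_mem_zip hp).1)
  have hF : FreeGroup.mk (interF ys fs) = FreeGroup.mk ys :=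
    mk_interF ys fs hfs_len (fun p hp => hfs p.1 (List.of_mem_zip hp).1)
  have hE' : FreeGroup.mk (interE es' xs) = FreeGroup.mk xs :=
    mk_interE es' xs hes'_len (fun p hp => (hes' p hp).1)
  have hF' : FreeGroup.mk (interF ys fs') = FreeGroup.mk ys :=
    mk_interF ys fs' hfs'_len (fun p hp => (hfs' p hp).1)
  have hu' : u = interE es xs ++ (p0 ++ ([x] ++ (p1 ++ ([linv x] ++ (p2 ++ interF ys fs))))) := by
    rw [hu]; simp
  have hmku : FreeGroup.mk u = FreeGroup.mk xs * FreeGroup.mk ys := by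
    rw [hu']
    simp only [mk_append]
    rw [hE, hp0, hp1, hp2, hF, mk_linv]
    group
  have hmkv : FreeGroup.mk v = FreeGroup.mk xs * FreeGroup.mk ys := by
    rw [hv]
    simp only [mk_append]
    rw [hE', hq, hF', mul_one]
  refine ⟨hmku.trans hmkv.symm, ⟨hredx, ?_, ?_⟩, ?_⟩
  · exact ⟨interE es xs ++ p0, ⟨x :: (p1 ++ linv x :: (p2 ++ interF ys fs)), by rw [hu]⟩,
      by rw [mk_append, hE, hp0, mul_one]⟩
  · refine ⟨(interE es xs ++ p0) ++ [x],
      ⟨p1 ++ linv x :: (p2 ++ interF ys fs), by rw [hu]; simp⟩, ?_⟩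
    simp only [mk_append]
    rw [hE, hp0, mul_one]
  · rintro ⟨-, -, p, hp, hmk⟩
    rw [hv, List.append_assoc] at hp
    rcases prefix_append_cases hp with h1 | ⟨r, hr, rfl⟩
    · exact no_edge_interE es' xs x p hes'_len hredx hes' h1 hmk
    · rw [mk_append, hE', mk_append xs [x]] at hmk
      have hmkr : FreeGroup.mk r = FreeGroup.mk [x] := mul_left_cancel hmk
      rcases prefix_append_cases hr with h2 | ⟨r', hr', rfl⟩
      · exact avoids_notMem hqx ⟨r, h2, hmkr⟩
      · rw [mk_append, hq, one_mul] at hmkr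
        have hws : Reduced (wordInv ys ++ [x]) := by
          unfold Reduced List.Chain'
          rw [List.isChain_append]
          refine ⟨reduced_wordInv hredy, List.isChain_singleton _, ?_⟩
          intro a ha b' hb'
          simp only [List.head?_cons, Option.mem_def, Option.some.injEq] at hb'
          subst hb'
          cases ys with
          | nil => simp [wordInv] at ha
          | cons y₁ ys₀ =>
            rw [wordInv_cons, List.getLast?_concat] at ha
            simp only [Option.mem_def, Option.some.injEq] at ha
            subst ha
            rw [linv_linv]
            intro hxy
            exact hy1 (by simp [hxy])
        exact no_edge_interF ys fs' [x] r' hfs'_len hws (by simp) hfs' hr' hmkr
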